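/- Let ε > 0 and n, m ∈ ℕ, and let W_{nm} = W^ε_{v_mᵋ}[v_nᵋ] be the cross-Wigner transform of the Hermite functions v_nᵋ and v_mᵋ. Then W_{nm} satisfies the Baker (cosine) bracket eigenvalue equation of the harmonic oscillator: for all (x,p) ∈ ℝ², ((x² + p²)/2)·W_{nm}(x,p) − (ε²/8)·(∂²W_{nm}/∂x² + ∂²W_{nm}/∂p²)(x,p) = ((E_nᵋ + E_mᵋ)/2)·W_{nm}(x,p), where E_kᵋ = (k + 1/2)ε. -/

import Mathlib

open MeasureTheory

/-- The semiclassical cross-Wigner transform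
`W^ε_g[f](x,p) = (2πε)⁻¹ ∫ e^{−ipy/ε} f(x+y/2) conj(g(x−y/2)) dy`. -/
noncomputable def crossWigner (ε : ℝ) (f g : ℝ → ℂ) (x p : ℝ) : ℂ :=
  ((2 * Real.pi * ε : ℝ) : ℂ)⁻¹ *
    ∫ y : ℝ, Complex.exp (-Complex.I * (p : ℂ) * (y : ℂ) / (ε : ℂ)) *
      f (x + y / 2) * (starRingEnd ℂ) (g (x - y / 2))

/-- The nth physicists' Hermite polynomial (as a function). -/
noncomputable def hermitePoly (n : ℕ) (x : ℝ) : ℝ :=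
  (-1 : ℝ) ^ n * Real.exp (x ^ 2) * iteratedDeriv n (fun t : ℝ => Real.exp (-t ^ 2)) x

/-- The semiclassical Hermite function `v_nᵋ`. -/
noncomputable def hermiteFun (ε : ℝ) (n : ℕ) (x : ℝ) : ℝ :=
  (Real.pi * ε) ^ (-(1 / 4 : ℝ)) * ((2 : ℝ) ^ n * (n.factorial : ℝ)) ^ (-(1 / 2 : ℝ)) *
    Real.exp (-x ^ 2 / (2 * ε)) * hermitePoly n (x / Real.sqrt ε)

open Polynomial Filter Real



noncomputable def HP : ℕ → Polynomial ℝ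
  | 0 => 1
  | n+1 => C 2 * X * HP n - derivative (HP n)

lemma HP_succ (n : ℕ) : HP (n+1) = C 2 * X * HP n - derivative (HP n) := rfl

lemma derivative_HP : ∀ n : ℕ, derivative (HP (n+1)) = C (2*(n+1) : ℝ) * HP n := by
  intro n
  induction n with
  | zero => simp [HP]
  | succ n ih =>
      rw [HP_succ (n+1), derivative_sub, derivative_mul, derivative_mul, derivative_C,
        derivative_X, ih, derivative_C_mul, HP_succ n]
      simp only [map_mul, map_add, map_ofNat, Nat.cast_add, Nat.cast_one, map_one]
      ring

lemma hermiteODE_poly (n : ℕ) :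
    derivative (derivative (HP n)) + C (2*n : ℝ) * HP n = C 2 * X * derivative (HP n) := by
  cases n with
  | zero => simp [HP]
  | succ n =>
      rw [derivative_HP, derivative_C_mul, HP_succ n]
      simp only [map_mul, map_add, map_ofNat, Nat.cast_add, Nat.cast_one, map_one]
      ring

lemma iteratedDeriv_gauss (n : ℕ) :
    iteratedDeriv n (fun t : ℝ => Real.exp (-t^2)) =
      fun x => (-1:ℝ)^n * (HP n).eval x * Real.exp (-x^2) := by
  induction n with
  | zero => funext x; simp [HP]
  | succ n ih =>
      rw [iteratedDeriv_succ, ih]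
      funext x
      have h1 : HasDerivAt (fun x : ℝ => (-1:ℝ)^n * (HP n).eval x * Real.exp (-x^2))
          ((-1:ℝ)^n * ((derivative (HP n)).eval x * Real.exp (-x^2)
            + (HP n).eval x * (Real.exp (-x^2) * (-2*x)))) x := by
        have hp : HasDerivAt (fun x : ℝ => (HP n).eval x) ((derivative (HP n)).eval x) x :=
          (HP n).hasDerivAt x
        have he : HasDerivAt (fun x : ℝ => Real.exp (-x^2)) (Real.exp (-x^2) * (-2*x)) x := by
          have : HasDerivAt (fun x : ℝ => -x^2) (-2*x) x := by
            simpa using ((hasDerivAt_pow 2 x).fun_neg)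
          simpa using this.exp
        simpa [mul_assoc] using (hp.mul he).const_mul ((-1:ℝ)^n)
      rw [h1.deriv]
      show _ = (-1:ℝ)^(n+1) * (C 2 * X * HP n - derivative (HP n)).eval x * Real.exp (-x^2)
      simp only [eval_sub, eval_mul, eval_C, eval_X]
      ring

lemma hermitePoly_eq (n : ℕ) (x : ℝ) :
    (-1 : ℝ) ^ n * Real.exp (x ^ 2) * iteratedDeriv n (fun t : ℝ => Real.exp (-t ^ 2)) x
      = (HP n).eval x := by
  have : (fun t : ℝ => Real.exp (-t ^ 2)) = fun t : ℝ => Real.exp (-t^2) := rfl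
  rw [this, iteratedDeriv_gauss]
  rw [show (-1:ℝ)^n * Real.exp (x^2) * ((-1:ℝ)^n * (HP n).eval x * Real.exp (-x^2))
    = ((-1:ℝ)^n)^2 * (HP n).eval x * (Real.exp (x^2) * Real.exp (-x^2)) by ring]
  rw [← Real.exp_add]
  simp [← pow_mul, pow_mul']


noncomputable def DD (ε : ℝ) (q : Polynomial ℝ) : Polynomial ℝ :=
  derivative q - C ε⁻¹ * (X * q)

noncomputable def GP (ε : ℝ) (q : Polynomial ℝ) (t : ℝ) : ℝ :=
  q.eval t * Real.exp (-t^2/(2*ε))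

lemma GP_hasDerivAt (ε : ℝ) (hε : 0 < ε) (q : Polynomial ℝ) (t : ℝ) :
    HasDerivAt (GP ε q) (GP ε (DD ε q) t) t := by
  have hp : HasDerivAt (fun t : ℝ => q.eval t) ((derivative q).eval t) t := q.hasDerivAt t
  have he : HasDerivAt (fun t : ℝ => Real.exp (-t^2/(2*ε)))
      (Real.exp (-t^2/(2*ε)) * (-t/ε)) t := by
    have h0 : HasDerivAt (fun t : ℝ => -t^2/(2*ε)) (-t/ε) t := by
      have : HasDerivAt (fun t : ℝ => -t^2/(2*ε)) (-(2*t^1)/(2*ε)) t := by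
        simpa using ((hasDerivAt_pow 2 t).neg.div_const (2*ε))
      convert this using 1
      field_simp
    simpa using h0.exp
  have := hp.fun_mul he
  refine this.congr_deriv ?_
  simp only [GP, DD, eval_sub, eval_mul, eval_C, eval_X]
  field_simp
  ring

lemma GP_bound (ε : ℝ) (hε : 0 < ε) (q : Polynomial ℝ) :
    ∃ C : ℝ, 0 ≤ C ∧ ∀ t : ℝ, |GP ε q t| ≤ C * Real.exp (-t^2/(4*ε)) := by
  refine ⟨∑ i ∈ Finset.range (q.natDegree + 1),
    |q.coeff i| * (1 + (i.factorial : ℝ) * (4*ε)^i), by positivity, fun t => ?_⟩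
  have key : ∀ i : ℕ, |t|^i ≤ (1 + (i.factorial : ℝ) * (4*ε)^i) * Real.exp (t^2/(4*ε)) := by
    intro i
    have hexp1 : (1:ℝ) ≤ Real.exp (t^2/(4*ε)) := Real.one_le_exp (by positivity)
    have hfac : (0:ℝ) < (i.factorial : ℝ) := by exact_mod_cast i.factorial_pos
    have hpos : (0:ℝ) < (4*ε)^i := by positivity
    rcases le_or_gt |t| 1 with h | h
    · have h1 : |t|^i ≤ 1 := pow_le_one₀ (abs_nonneg t) h
      nlinarith [mul_le_mul_of_nonneg_left hexp1
        (show (0:ℝ) ≤ 1 + (i.factorial : ℝ) * (4*ε)^i by positivity)]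
    · have h2 : |t|^i ≤ (t^2)^i := by
        calc |t|^i ≤ (|t|^2)^i := pow_le_pow_left₀ (abs_nonneg t) (by nlinarith) i
          _ = (t^2)^i := by rw [sq_abs]
      have h3 := Real.pow_div_factorial_le_exp (x := t^2/(4*ε)) (by positivity) i
      rw [div_pow, div_div] at h3
      have h5 := (div_le_iff₀ (show (0:ℝ) < (4*ε)^i * (i.factorial:ℝ) by positivity)).mp h3
      nlinarith [Real.exp_pos (t^2/(4*ε))]
  have h1 : |q.eval t| ≤ (∑ i ∈ Finset.range (q.natDegree + 1),
      |q.coeff i| * (1 + (i.factorial : ℝ) * (4*ε)^i)) * Real.exp (t^2/(4*ε)) := by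
    rw [Polynomial.eval_eq_sum_range, Finset.sum_mul]
    refine (Finset.abs_sum_le_sum_abs _ _).trans (Finset.sum_le_sum fun i _ => ?_)
    rw [abs_mul, abs_pow, mul_assoc]
    exact mul_le_mul_of_nonneg_left (key i) (abs_nonneg _)
  have h2 : |GP ε q t| = |q.eval t| * Real.exp (-t^2/(2*ε)) := by
    rw [GP, abs_mul, abs_of_pos (Real.exp_pos _)]
  rw [h2]
  calc |q.eval t| * Real.exp (-t^2/(2*ε))
      ≤ ((∑ i ∈ Finset.range (q.natDegree + 1),
          |q.coeff i| * (1 + (i.factorial : ℝ) * (4*ε)^i)) * Real.exp (t^2/(4*ε)))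
        * Real.exp (-t^2/(2*ε)) :=
        mul_le_mul_of_nonneg_right h1 (Real.exp_pos _).le
    _ = _ := by
        rw [mul_assoc, ← Real.exp_add]
        congr 2
        field_simp; ring

lemma continuous_GP (ε : ℝ) (q : Polynomial ℝ) : Continuous (GP ε q) :=
  q.continuous.mul (Real.continuous_exp.comp (by continuity))

lemma norm_phase (ε p y : ℝ) : ‖Complex.exp (-Complex.I * p * y / ε)‖ = 1 := by
  have : -Complex.I * (p:ℂ) * (y:ℂ) / (ε:ℂ) = ((-(p*y/ε) : ℝ) : ℂ) * Complex.I := by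
    push_cast; ring
  rw [this, Complex.norm_exp_ofReal_mul_I]

lemma integrable_pow_gauss (b : ℝ) (hb : 0 < b) (j : ℕ) :
    Integrable fun y : ℝ => |y|^j * Real.exp (-b*y^2) := by
  have h := integrable_rpow_mul_exp_neg_mul_sq hb (s := j) (by
    have : (0:ℝ) ≤ j := Nat.cast_nonneg j
    linarith)
  have h2 : Integrable fun y : ℝ => y^j * Real.exp (-b*y^2) := by
    refine h.congr (Filter.Eventually.of_forall fun y => ?_)
    simp [Real.rpow_natCast]
  have := h2.abs
  refine this.congr (Filter.Eventually.of_forall fun y => ?_)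
  simp [abs_mul, abs_pow, abs_of_pos (Real.exp_pos _)]

lemma integrable_master (ε : ℝ) (hε : 0 < ε) (a b : Polynomial ℝ) (x p : ℝ) (j : ℕ) :
    Integrable fun y : ℝ => (y:ℂ)^j *
      (Complex.exp (-Complex.I*p*y/ε) * (GP ε a (x+y/2) : ℂ) * (GP ε b (x-y/2) : ℂ)) := by
  obtain ⟨Ca, hCa0, hCa⟩ := GP_bound ε hε a
  obtain ⟨Cb, hCb0, hCb⟩ := GP_bound ε hε b
  refine Integrable.mono' (((integrable_pow_gauss (1/(8*ε)) (by positivity) j).const_mul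
    (Ca*Cb)).congr (Filter.Eventually.of_forall fun y => rfl)) ?_ ?_
  · apply Continuous.aestronglyMeasurable
    have h1 : Continuous fun y : ℝ => Complex.exp (-Complex.I*p*y/ε) :=
      Complex.continuous_exp.comp (by continuity)
    have h2 : Continuous fun y : ℝ => (GP ε a (x+y/2) : ℂ) :=
      Complex.continuous_ofReal.comp ((continuous_GP ε a).comp (by continuity))
    have h3 : Continuous fun y : ℝ => (GP ε b (x-y/2) : ℂ) :=
      Complex.continuous_ofReal.comp ((continuous_GP ε b).comp (by continuity))
    exact (Complex.continuous_ofReal.pow j).mul ((h1.mul h2).mul h3)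
  · refine Filter.Eventually.of_forall fun y => ?_
    have hub : |GP ε a (x+y/2)| * |GP ε b (x-y/2)| ≤ Ca * Cb * Real.exp (-(1/(8*ε))*y^2) := by
      calc |GP ε a (x+y/2)| * |GP ε b (x-y/2)|
          ≤ (Ca * Real.exp (-(x+y/2)^2/(4*ε))) * (Cb * Real.exp (-(x-y/2)^2/(4*ε))) :=
            mul_le_mul (hCa _) (hCb _) (abs_nonneg _) (by positivity)
        _ = Ca * Cb * Real.exp (-(x+y/2)^2/(4*ε) + -(x-y/2)^2/(4*ε)) := by
            rw [Real.exp_add]; ring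
        _ ≤ Ca * Cb * Real.exp (-(1/(8*ε))*y^2) := by
            refine mul_le_mul_of_nonneg_left (Real.exp_le_exp.mpr ?_) (by positivity)
            rw [← add_div, div_le_iff₀ (by positivity)]
            have h8 : (-(1/(8*ε))*y^2) * (4*ε) = -y^2/2 := by field_simp; ring
            rw [h8]
            nlinarith [sq_nonneg x]
    calc ‖(y:ℂ)^j * (Complex.exp (-Complex.I*p*y/ε) * (GP ε a (x+y/2) : ℂ) * (GP ε b (x-y/2) : ℂ))‖
        = |y|^j * (1 * |GP ε a (x+y/2)| * |GP ε b (x-y/2)|) := by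
          simp only [norm_mul, norm_pow, Complex.norm_real, Real.norm_eq_abs, norm_phase]
      _ = |y|^j * (|GP ε a (x+y/2)| * |GP ε b (x-y/2)|) := by ring
      _ ≤ |y|^j * (Ca * Cb * Real.exp (-(1/(8*ε))*y^2)) := by
          exact mul_le_mul_of_nonneg_left hub (by positivity)
      _ = Ca * Cb * (|y|^j * Real.exp (-(1/(8*ε))*y^2)) := by ring

noncomputable def qpoly (ε : ℝ) (k : ℕ) : Polynomial ℝ :=
  C ((Real.pi * ε) ^ (-(1 / 4 : ℝ)) * ((2 : ℝ) ^ k * (k.factorial : ℝ)) ^ (-(1 / 2 : ℝ))) *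
    (HP k).comp (C (Real.sqrt ε)⁻¹ * X)

lemma GP_ODE (ε : ℝ) (hε : 0 < ε) (k : ℕ) (t : ℝ) :
    t^2/2 * GP ε (qpoly ε k) t - ε^2/2 * GP ε (DD ε (DD ε (qpoly ε k))) t
      = (k+1/2)*ε * GP ε (qpoly ε k) t := by
  have hεne : ε ≠ 0 := ne_of_gt hε
  set u : ℝ := (Real.sqrt ε)⁻¹ with hu
  have hsqne : Real.sqrt ε ≠ 0 := ne_of_gt (Real.sqrt_pos.mpr hε)
  have hu2 : ε * u^2 = 1 := by
    rw [hu, inv_pow, Real.sq_sqrt hε.le]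
    field_simp
  have hinv : ε⁻¹ = u^2 := by
    rw [hu, inv_pow]
    exact congrArg Inv.inv (Real.sq_sqrt hε.le).symm
  set A : ℝ := (Real.pi * ε) ^ (-(1 / 4 : ℝ)) * ((2 : ℝ) ^ k * (k.factorial : ℝ)) ^ (-(1 / 2 : ℝ))
  set r : Polynomial ℝ := HP k
  set R0 : ℝ := r.eval (u*t)
  set R1 : ℝ := (derivative r).eval (u*t)
  set R2 : ℝ := (derivative (derivative r)).eval (u*t)
  have hR : R2 + 2*k*R0 = 2*(u*t)*R1 := by
    have := congrArg (fun q : Polynomial ℝ => q.eval (u*t)) (hermiteODE_poly k)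
    simpa [R0, R1, R2] using this
  -- eval facts
  have hq : qpoly ε k = C A * r.comp (C u * X) := rfl
  have hd1 : derivative (qpoly ε k) = C (A*u) * (derivative r).comp (C u * X) := by
    rw [hq, derivative_C_mul, Polynomial.derivative_comp]
    simp [map_mul]
    ring
  have hd2 : derivative (derivative (qpoly ε k))
      = C (A*u*u) * (derivative (derivative r)).comp (C u * X) := by
    rw [hd1, derivative_C_mul, Polynomial.derivative_comp]
    simp [map_mul]
    ring
  have E0 : (qpoly ε k).eval t = A * R0 := by
    rw [hq]; simp [Polynomial.eval_comp, R0]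
  have E1 : (derivative (qpoly ε k)).eval t = A * u * R1 := by
    rw [hd1]; simp [Polynomial.eval_comp, R1]
  have E2 : (derivative (derivative (qpoly ε k))).eval t = A * u * u * R2 := by
    rw [hd2]; simp [Polynomial.eval_comp, R2]
  have EDD : (DD ε (DD ε (qpoly ε k))).eval t
      = (A*u*u*R2 - u^2*(A*R0 + t*(A*u*R1))) - u^2*(t*((A*u*R1) - u^2*(t*(A*R0)))) := by
    simp only [DD, derivative_sub, derivative_C_mul, derivative_mul, derivative_X, one_mul,
      derivative_C, zero_mul, eval_zero,
      eval_sub, eval_mul, eval_C, eval_X, eval_add, E0, E1, E2, hinv]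
    ring
  simp only [GP, EDD, E0]
  set e : ℝ := Real.exp (-t^2/(2*ε))
  linear_combination (e*A*(-(ε/2))) * hR
    + (e*(A*(-(ε/2)*R2 + (ε/2)*R0 + ε*u*t*R1 - t^2*R0/2*(ε*u^2+1)))) * hu2

/-- canonical integrand -/
noncomputable def IG (ε x p : ℝ) (a b : Polynomial ℝ) (j : ℕ) (y : ℝ) : ℂ :=
  (-Complex.I*y/ε)^j *
    (Complex.exp (-Complex.I*p*y/ε) * (GP ε a (x+y/2) : ℂ) * (GP ε b (x-y/2) : ℂ))

noncomputable def SI (ε x p : ℝ) (a b : Polynomial ℝ) (j : ℕ) : ℂ :=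
  ∫ y : ℝ, IG ε x p a b j y

-- product bound
lemma GP_prod_le (ε : ℝ) (hε : 0 < ε) (a b : Polynomial ℝ) :
    ∃ C : ℝ, 0 ≤ C ∧ ∀ x y : ℝ,
      |GP ε a (x+y/2)| * |GP ε b (x-y/2)| ≤ C * Real.exp (-(1/(8*ε))*y^2) := by
  obtain ⟨Ca, hCa0, hCa⟩ := GP_bound ε hε a
  obtain ⟨Cb, hCb0, hCb⟩ := GP_bound ε hε b
  refine ⟨Ca*Cb, by positivity, fun x y => ?_⟩
  calc |GP ε a (x+y/2)| * |GP ε b (x-y/2)|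
      ≤ (Ca * Real.exp (-(x+y/2)^2/(4*ε))) * (Cb * Real.exp (-(x-y/2)^2/(4*ε))) :=
        mul_le_mul (hCa _) (hCb _) (abs_nonneg _) (by positivity)
    _ = Ca * Cb * Real.exp (-(x+y/2)^2/(4*ε) + -(x-y/2)^2/(4*ε)) := by
        rw [Real.exp_add]; ring
    _ ≤ Ca * Cb * Real.exp (-(1/(8*ε))*y^2) := by
        refine mul_le_mul_of_nonneg_left (Real.exp_le_exp.mpr ?_) (by positivity)
        rw [← add_div, div_le_iff₀ (by positivity)]
        have h8 : (-(1/(8*ε))*y^2) * (4*ε) = -y^2/2 := by field_simp; ring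
        rw [h8]
        nlinarith [sq_nonneg x]

lemma norm_IG (ε : ℝ) (hε : 0 < ε) (x p : ℝ) (a b : Polynomial ℝ) (j : ℕ) (y : ℝ) :
    ‖IG ε x p a b j y‖ = (|y|/ε)^j * (|GP ε a (x+y/2)| * |GP ε b (x-y/2)|) := by
  have h1 : ‖(-Complex.I*y/(ε:ℂ))‖ = |y|/ε := by
    rw [norm_div, norm_mul]
    simp [Complex.norm_real, Real.norm_eq_abs, abs_of_pos hε]
  simp only [IG, norm_mul, norm_pow, h1, Complex.norm_real, Real.norm_eq_abs, norm_phase]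
  ring

lemma continuous_IG (ε x p : ℝ) (a b : Polynomial ℝ) (j : ℕ) :
    Continuous (IG ε x p a b j) := by
  have h0 : Continuous fun y : ℝ => (-Complex.I*y/(ε:ℂ)) := by continuity
  have h1 : Continuous fun y : ℝ => Complex.exp (-Complex.I*p*y/ε) :=
    Complex.continuous_exp.comp (by continuity)
  have h2 : Continuous fun y : ℝ => (GP ε a (x+y/2) : ℂ) :=
    Complex.continuous_ofReal.comp ((continuous_GP ε a).comp (by continuity))
  have h3 : Continuous fun y : ℝ => (GP ε b (x-y/2) : ℂ) :=
    Complex.continuous_ofReal.comp ((continuous_GP ε b).comp (by continuity))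
  exact (h0.pow j).mul ((h1.mul h2).mul h3)

lemma integrable_IG (ε : ℝ) (hε : 0 < ε) (x p : ℝ) (a b : Polynomial ℝ) (j : ℕ) :
    Integrable (IG ε x p a b j) := by
  obtain ⟨C, hC0, hC⟩ := GP_prod_le ε hε a b
  refine Integrable.mono' (((integrable_pow_gauss (1/(8*ε)) (by positivity) j).const_mul
    ((1/ε)^j * C))) (continuous_IG ε x p a b j).aestronglyMeasurable ?_
  refine Eventually.of_forall fun y => ?_
  rw [norm_IG ε hε x p a b j y]
  calc (|y|/ε)^j * (|GP ε a (x+y/2)| * |GP ε b (x-y/2)|)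
      ≤ (|y|/ε)^j * (C * Real.exp (-(1/(8*ε))*y^2)) := by
        refine mul_le_mul_of_nonneg_left (hC x y) (by positivity)
    _ = (1/ε)^j * C * (|y|^j * Real.exp (-(1/(8*ε))*y^2)) := by
        rw [div_pow]; ring

lemma hasDerivAt_GP_shift (ε : ℝ) (hε : 0 < ε) (a : Polynomial ℝ) (c : ℝ) (x : ℝ) :
    HasDerivAt (fun x' : ℝ => ((GP ε a (x'+c) : ℝ) : ℂ)) ((GP ε (DD ε a) (x+c) : ℂ)) x := by
  have h := (GP_hasDerivAt ε hε a (x+c)).comp x ((hasDerivAt_id x).add_const c)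
  simpa using h.ofReal_comp

lemma hasDerivAt_GP_shift' (ε : ℝ) (hε : 0 < ε) (b : Polynomial ℝ) (c : ℝ) (x : ℝ) :
    HasDerivAt (fun x' : ℝ => ((GP ε b (x'-c) : ℝ) : ℂ)) ((GP ε (DD ε b) (x-c) : ℂ)) x := by
  have h := (GP_hasDerivAt ε hε b (x-c)).comp x ((hasDerivAt_id x).sub_const c)
  simpa using h.ofReal_comp

lemma hasDerivAt_SI_x (ε : ℝ) (hε : 0 < ε) (p : ℝ) (a b : Polynomial ℝ) (x : ℝ) :
    HasDerivAt (fun x' => SI ε x' p a b 0)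
      (SI ε x p (DD ε a) b 0 + SI ε x p a (DD ε b) 0) x := by
  obtain ⟨C1, hC10, hC1⟩ := GP_prod_le ε hε (DD ε a) b
  obtain ⟨C2, hC20, hC2⟩ := GP_prod_le ε hε a (DD ε b)
  have key := hasDerivAt_integral_of_dominated_loc_of_deriv_le (μ := volume) (x₀ := x)
    (F := fun x' y => IG ε x' p a b 0 y)
    (F' := fun x' y => IG ε x' p (DD ε a) b 0 y + IG ε x' p a (DD ε b) 0 y)
    (bound := fun y => (C1 + C2) * Real.exp (-(1/(8*ε))*y^2))
    (s := Metric.ball _ 1) (Metric.ball_mem_nhds _ one_pos)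
    (Eventually.of_forall fun x' => (continuous_IG ε x' p a b 0).aestronglyMeasurable)
    (integrable_IG ε hε x p a b 0)
    (((continuous_IG ε x p (DD ε a) b 0).add (continuous_IG ε x p a (DD ε b) 0)).aestronglyMeasurable)
    ?_ ?_ ?_
  · have h2 : (∫ y : ℝ, (IG ε x p (DD ε a) b 0 y + IG ε x p a (DD ε b) 0 y))
        = SI ε x p (DD ε a) b 0 + SI ε x p a (DD ε b) 0 :=
      integral_add (integrable_IG ε hε x p (DD ε a) b 0) (integrable_IG ε hε x p a (DD ε b) 0)
    rw [h2] at key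
    exact key.2
  · refine Eventually.of_forall fun y => fun x' _ => ?_
    refine (norm_add_le _ _).trans ?_
    rw [norm_IG ε hε, norm_IG ε hε]
    simp only [pow_zero, one_mul]
    linarith [hC1 x' y, hC2 x' y]
  · exact ((integrable_pow_gauss (1/(8*ε)) (by positivity) 0).const_mul (C1+C2)).congr
      (Eventually.of_forall fun y => by simp)
  · refine Eventually.of_forall fun y => fun x' _ => ?_
    have hf := hasDerivAt_GP_shift ε hε a (y/2) x'
    have hg := hasDerivAt_GP_shift' ε hε b (y/2) x'
    have hfg := (hf.fun_mul hg)
    have h := hfg.const_mul (Complex.exp (-Complex.I*p*y/ε))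
    have harr : (fun x'' => Complex.exp (-Complex.I*p*y/ε) *
        ((GP ε a (x''+y/2) : ℂ) * (GP ε b (x''-y/2) : ℂ)))
        = fun x'' => IG ε x'' p a b 0 y := by
      funext x''; simp only [IG, pow_zero, one_mul]; ring
    rw [harr] at h
    refine h.congr_deriv ?_
    simp only [IG, pow_zero, one_mul]
    ring

lemma hasDerivAt_SI_p (ε : ℝ) (hε : 0 < ε) (x : ℝ) (a b : Polynomial ℝ) (j : ℕ) (p : ℝ) :
    HasDerivAt (fun p' => SI ε x p' a b j) (SI ε x p a b (j+1)) p := by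
  obtain ⟨C, hC0, hC⟩ := GP_prod_le ε hε a b
  have harg : ∀ (p' y : ℝ), (-Complex.I*(y:ℂ)/ε) * (p':ℂ) = -Complex.I*p'*y/ε := by
    intro p' y; push_cast; ring
  have key := hasDerivAt_integral_of_dominated_loc_of_deriv_le (μ := volume) (x₀ := p)
    (F := fun p' y => IG ε x p' a b j y)
    (F' := fun p' y => IG ε x p' a b (j+1) y)
    (bound := fun y => (1/ε)^(j+1) * C * (|y|^(j+1) * Real.exp (-(1/(8*ε))*y^2)))
    (s := Metric.ball _ 1) (Metric.ball_mem_nhds _ one_pos)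
    (Eventually.of_forall fun p' => (continuous_IG ε x p' a b j).aestronglyMeasurable)
    (integrable_IG ε hε x p a b j)
    (continuous_IG ε x p a b (j+1)).aestronglyMeasurable
    ?_ ?_ ?_
  · exact key.2
  · refine Eventually.of_forall fun y => fun p' _ => ?_
    rw [norm_IG ε hε x p' a b (j+1) y]
    calc (|y|/ε)^(j+1) * (|GP ε a (x+y/2)| * |GP ε b (x-y/2)|)
        ≤ (|y|/ε)^(j+1) * (C * Real.exp (-(1/(8*ε))*y^2)) :=
          mul_le_mul_of_nonneg_left (hC x y) (by positivity)
      _ = (1/ε)^(j+1) * C * (|y|^(j+1) * Real.exp (-(1/(8*ε))*y^2)) := by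
          rw [div_pow]; ring
  · exact ((integrable_pow_gauss (1/(8*ε)) (by positivity) (j+1)).const_mul _)
  · refine Eventually.of_forall fun y => fun p' _ => ?_
    have hlin : HasDerivAt (fun p'' : ℝ => ((-Complex.I*y/ε) * (p'':ℂ))) (-Complex.I*y/ε) p' := by
      simpa using ((hasDerivAt_id p').ofReal_comp.const_mul (-Complex.I*(y:ℂ)/ε))
    have hexp := hlin.cexp
    have h := ((hexp.mul_const ((GP ε a (x+y/2) : ℝ) : ℂ)).mul_const
      ((GP ε b (x-y/2) : ℝ) : ℂ)).const_mul ((-Complex.I*(y:ℂ)/ε)^j)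
    have hfun : (fun p'' : ℝ => (-Complex.I*(y:ℂ)/ε)^j *
        ((Complex.exp ((-Complex.I*(y:ℂ)/ε) * (p'':ℂ)) * ((GP ε a (x+y/2) : ℝ) : ℂ))
          * ((GP ε b (x-y/2) : ℝ) : ℂ)))
        = fun p'' => IG ε x p'' a b j y := by
      funext p''; rw [harg p'' y]; simp only [IG]
    rw [hfun] at h
    refine h.congr_deriv ?_
    simp only [IG, pow_succ]
    rw [← harg p' y]
    ring

lemma ibp (ε : ℝ) (hε : 0 < ε) (x p : ℝ) (a b : Polynomial ℝ) :
    Complex.I*p*SI ε x p a b 0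
      = ((ε:ℂ)/2) * (SI ε x p (DD ε a) b 0 - SI ε x p a (DD ε b) 0) := by
  have hderiv : ∀ y : ℝ, HasDerivAt (fun y' => IG ε x p a b 0 y')
      ((-Complex.I*p/ε) * IG ε x p a b 0 y
        + ((1/2:ℂ) * IG ε x p (DD ε a) b 0 y - (1/2:ℂ) * IG ε x p a (DD ε b) 0 y)) y := by
    intro y
    have harg : ∀ y' : ℝ, (-Complex.I*(p:ℂ)/ε) * (y':ℂ) = -Complex.I*p*y'/ε := by
      intro y'; push_cast; ring
    have hlin : HasDerivAt (fun y' : ℝ => ((-Complex.I*p/ε) * (y':ℂ))) (-Complex.I*p/ε) y := by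
      simpa using ((hasDerivAt_id y).ofReal_comp.const_mul (-Complex.I*(p:ℂ)/ε))
    have hexp := hlin.cexp
    have hexp2 : HasDerivAt (fun y' : ℝ => Complex.exp (-Complex.I*p*y'/ε))
        ((-Complex.I*p/ε) * Complex.exp (-Complex.I*p*y/ε)) y := by
      have hfun : (fun y' : ℝ => Complex.exp ((-Complex.I*p/ε) * (y':ℂ)))
          = fun y' : ℝ => Complex.exp (-Complex.I*p*y'/ε) := by
        funext y'; rw [harg y']
      rw [hfun, harg y] at hexp
      simpa [mul_comm] using hexp
    have hf : HasDerivAt (fun y' : ℝ => ((GP ε a (x+y'/2) : ℝ) : ℂ))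
        ((GP ε (DD ε a) (x+y/2) * (1/2) : ℝ) : ℂ) y := by
      have hi : HasDerivAt (fun y' : ℝ => x + y'/2) (1/2) y := by
        simpa using ((hasDerivAt_id y).div_const 2).const_add x
      exact ((GP_hasDerivAt ε hε a (x+y/2)).comp y hi).ofReal_comp
    have hg : HasDerivAt (fun y' : ℝ => ((GP ε b (x-y'/2) : ℝ) : ℂ))
        ((GP ε (DD ε b) (x-y/2) * -(1/2) : ℝ) : ℂ) y := by
      have hi : HasDerivAt (fun y' : ℝ => x - y'/2) (-(1/2)) y := by
        simpa using ((hasDerivAt_id y).div_const 2).const_sub x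
      exact ((GP_hasDerivAt ε hε b (x-y/2)).comp y hi).ofReal_comp
    have h := (hexp2.fun_mul hf).fun_mul hg
    have hfun : (fun y' : ℝ => Complex.exp (-Complex.I*p*y'/ε) * ((GP ε a (x+y'/2) : ℝ) : ℂ)
        * ((GP ε b (x-y'/2) : ℝ) : ℂ)) = fun y' => IG ε x p a b 0 y' := by
      funext y'; simp only [IG, pow_zero, one_mul]
    rw [hfun] at h
    refine h.congr_deriv ?_
    simp only [IG, pow_zero, one_mul]
    push_cast
    ring
  have hA : Integrable (fun y => (-Complex.I*p/ε) * IG ε x p a b 0 y) volume :=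
    (integrable_IG ε hε x p a b 0).const_mul _
  have hB : Integrable (fun y => (1/2:ℂ) * IG ε x p (DD ε a) b 0 y) volume :=
    (integrable_IG ε hε x p (DD ε a) b 0).const_mul _
  have hC : Integrable (fun y => (1/2:ℂ) * IG ε x p a (DD ε b) 0 y) volume :=
    (integrable_IG ε hε x p a (DD ε b) 0).const_mul _
  have hBC : Integrable (fun y => (1/2:ℂ) * IG ε x p (DD ε a) b 0 y
      - (1/2:ℂ) * IG ε x p a (DD ε b) 0 y) volume := hB.sub hC
  have hint' : Integrable (fun y => (-Complex.I*p/ε) * IG ε x p a b 0 y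
      + ((1/2:ℂ) * IG ε x p (DD ε a) b 0 y - (1/2:ℂ) * IG ε x p a (DD ε b) 0 y)) := hA.add hBC
  have h0 := integral_eq_zero_of_hasDerivAt_of_integrable hderiv hint'
    (integrable_IG ε hε x p a b 0)
  rw [integral_add hA hBC, integral_sub hB hC,
    integral_const_mul, integral_const_mul, integral_const_mul] at h0
  have hi : (ε:ℂ) * (ε:ℂ)⁻¹ = 1 :=
    mul_inv_cancel₀ (by exact_mod_cast ne_of_gt hε)
  show Complex.I*p*SI ε x p a b 0 = _
  have h0' : (-Complex.I*p/ε) * SI ε x p a b 0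
      + ((1/2:ℂ) * SI ε x p (DD ε a) b 0 - (1/2:ℂ) * SI ε x p a (DD ε b) 0) = 0 := h0
  linear_combination (-(ε:ℂ)) * h0' + (-(Complex.I*p*SI ε x p a b 0)) * hi


lemma hermiteFun_eq (ε : ℝ) (k : ℕ) (t : ℝ) : hermiteFun ε k t = GP ε (qpoly ε k) t := by
  unfold hermiteFun GP qpoly hermitePoly
  rw [eval_mul, eval_C, Polynomial.eval_comp, eval_mul, eval_C, eval_X, hermitePoly_eq]
  rw [show t / Real.sqrt ε = (Real.sqrt ε)⁻¹ * t by rw [div_eq_inv_mul]]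
  ring

lemma crossWigner_eq (ε : ℝ) (n m : ℕ) (x p : ℝ) :
    crossWigner ε (fun t => (hermiteFun ε n t : ℂ)) (fun t => (hermiteFun ε m t : ℂ)) x p
      = ((2 * Real.pi * ε : ℝ) : ℂ)⁻¹ * SI ε x p (qpoly ε n) (qpoly ε m) 0 := by
  unfold crossWigner SI
  congr 1
  refine integral_congr_ae (Eventually.of_forall fun y => ?_)
  show Complex.exp (-Complex.I * (p : ℂ) * (y : ℂ) / (ε : ℂ)) * (hermiteFun ε n (x + y/2) : ℂ)
      * (starRingEnd ℂ) ((hermiteFun ε m (x - y/2) : ℂ)) = IG ε x p (qpoly ε n) (qpoly ε m) 0 y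
  rw [Complex.conj_ofReal, hermiteFun_eq ε n, hermiteFun_eq ε m]
  simp only [IG, pow_zero, one_mul]

lemma final_id (ε : ℝ) (hε : 0 < ε) (n m : ℕ) (x p : ℝ) :
    ((x:ℂ)^2/2) * SI ε x p (qpoly ε n) (qpoly ε m) 0
      - ((ε:ℂ)^2/8) * SI ε x p (qpoly ε n) (qpoly ε m) 2
      - ((ε:ℂ)^2/4) * SI ε x p (DD ε (DD ε (qpoly ε n))) (qpoly ε m) 0
      - ((ε:ℂ)^2/4) * SI ε x p (qpoly ε n) (DD ε (DD ε (qpoly ε m))) 0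
    = (((((n:ℂ)+1/2)*ε) + (((m:ℂ)+1/2)*ε))/2) * SI ε x p (qpoly ε n) (qpoly ε m) 0 := by
  have hA : Integrable (fun y => ((x:ℂ)^2/2) * IG ε x p (qpoly ε n) (qpoly ε m) 0 y) volume :=
    (integrable_IG ε hε x p _ _ 0).const_mul _
  have hB : Integrable (fun y => ((ε:ℂ)^2/8) * IG ε x p (qpoly ε n) (qpoly ε m) 2 y) volume :=
    (integrable_IG ε hε x p _ _ 2).const_mul _
  have hC : Integrable (fun y => ((ε:ℂ)^2/4) * IG ε x p (DD ε (DD ε (qpoly ε n))) (qpoly ε m) 0 y) volume :=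
    (integrable_IG ε hε x p _ _ 0).const_mul _
  have hD : Integrable (fun y => ((ε:ℂ)^2/4) * IG ε x p (qpoly ε n) (DD ε (DD ε (qpoly ε m))) 0 y) volume :=
    (integrable_IG ε hε x p _ _ 0).const_mul _
  have hz : ((ε:ℂ))^2 ≠ 0 := pow_ne_zero 2 (by exact_mod_cast ne_of_gt hε)
  have hstep : ((x:ℂ)^2/2) * SI ε x p (qpoly ε n) (qpoly ε m) 0
      - ((ε:ℂ)^2/8) * SI ε x p (qpoly ε n) (qpoly ε m) 2
      - ((ε:ℂ)^2/4) * SI ε x p (DD ε (DD ε (qpoly ε n))) (qpoly ε m) 0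
      - ((ε:ℂ)^2/4) * SI ε x p (qpoly ε n) (DD ε (DD ε (qpoly ε m))) 0
      = ∫ y : ℝ, (((x:ℂ)^2/2) * IG ε x p (qpoly ε n) (qpoly ε m) 0 y
          - ((ε:ℂ)^2/8) * IG ε x p (qpoly ε n) (qpoly ε m) 2 y
          - ((ε:ℂ)^2/4) * IG ε x p (DD ε (DD ε (qpoly ε n))) (qpoly ε m) 0 y
          - ((ε:ℂ)^2/4) * IG ε x p (qpoly ε n) (DD ε (DD ε (qpoly ε m))) 0 y) := by
    have hAB : Integrable (fun y => ((x:ℂ)^2/2) * IG ε x p (qpoly ε n) (qpoly ε m) 0 y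
        - ((ε:ℂ)^2/8) * IG ε x p (qpoly ε n) (qpoly ε m) 2 y) volume := hA.sub hB
    have hABC : Integrable (fun y => ((x:ℂ)^2/2) * IG ε x p (qpoly ε n) (qpoly ε m) 0 y
        - ((ε:ℂ)^2/8) * IG ε x p (qpoly ε n) (qpoly ε m) 2 y
        - ((ε:ℂ)^2/4) * IG ε x p (DD ε (DD ε (qpoly ε n))) (qpoly ε m) 0 y) volume := hAB.sub hC
    rw [integral_sub hABC hD, integral_sub hAB hC, integral_sub hA hB,
      integral_const_mul, integral_const_mul, integral_const_mul, integral_const_mul]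
    rfl
  rw [hstep, SI, ← integral_const_mul]
  refine integral_congr_ae (Eventually.of_forall fun y => ?_)
  have hEsq : (-Complex.I*(y:ℂ)/ε)^2 = -((y:ℂ)^2/(ε:ℂ)^2) := by
    rw [div_pow, mul_pow, neg_sq, Complex.I_sq]; ring
  have hinv2 : (ε:ℂ)^2 * ((ε:ℂ)^2)⁻¹ = 1 := mul_inv_cancel₀ hz
  have hnR := GP_ODE ε hε n (x+y/2)
  have hmR := GP_ODE ε hε m (x-y/2)
  have hnC := congrArg (Complex.ofReal) hnR
  have hmC := congrArg (Complex.ofReal) hmR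
  push_cast at hnC hmC
  simp only [IG, pow_zero, one_mul, hEsq]
  set ph := Complex.exp (-Complex.I*(p:ℂ)*(y:ℂ)/(ε:ℂ))
  set fu := ((GP ε (qpoly ε n) (x+y/2) : ℝ) : ℂ)
  set gv := ((GP ε (qpoly ε m) (x-y/2) : ℝ) : ℂ)
  set fDD := ((GP ε (DD ε (DD ε (qpoly ε n))) (x+y/2) : ℝ) : ℂ)
  set gDD := ((GP ε (DD ε (DD ε (qpoly ε m))) (x-y/2) : ℝ) : ℂ)
  linear_combination (ph * gv * (1/2:ℂ)) * hnC + (ph * fu * (1/2:ℂ)) * hmC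
    + ((y:ℂ)^2/8 * (ph * fu * gv)) * hinv2


/-- The cross-Wigner transform `W_{nm} = W^ε_{v_mᵋ}[v_nᵋ]` of two Hermite functions
satisfies the Baker (cosine) bracket eigenvalue equation of the harmonic oscillator:
`((x²+p²)/2) W_{nm} − (ε²/8)(∂²_x + ∂²_p) W_{nm} = ((E_nᵋ + E_mᵋ)/2) W_{nm}` with
`E_kᵋ = (k + 1/2)ε`. -/
theorem crossWigner_hermite_baker_bracket_eigen (ε : ℝ) (hε : 0 < ε) (n m : ℕ) :
    ∀ x p : ℝ,
      (((x ^ 2 + p ^ 2) / 2 : ℝ) : ℂ) *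
          crossWigner ε (fun t => (hermiteFun ε n t : ℂ))
            (fun t => (hermiteFun ε m t : ℂ)) x p
        - ((ε : ℂ) ^ 2 / 8) *
            (iteratedDeriv 2 (fun x' : ℝ =>
                crossWigner ε (fun t => (hermiteFun ε n t : ℂ))
                  (fun t => (hermiteFun ε m t : ℂ)) x' p) x
              + iteratedDeriv 2 (fun p' : ℝ =>
                  crossWigner ε (fun t => (hermiteFun ε n t : ℂ))
                    (fun t => (hermiteFun ε m t : ℂ)) x p') p)
      = (((((n : ℂ) + 1 / 2) * ε) + (((m : ℂ) + 1 / 2) * ε)) / 2) *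
          crossWigner ε (fun t => (hermiteFun ε n t : ℂ))
            (fun t => (hermiteFun ε m t : ℂ)) x p := by
  intro x p
  have hcw : ∀ x' p' : ℝ, crossWigner ε (fun t => (hermiteFun ε n t : ℂ))
      (fun t => (hermiteFun ε m t : ℂ)) x' p'
      = ((2 * Real.pi * ε : ℝ) : ℂ)⁻¹ * SI ε x' p' (qpoly ε n) (qpoly ε m) 0 :=
    fun x' p' => crossWigner_eq ε n m x' p'
  set c₀ : ℂ := ((2 * Real.pi * ε : ℝ) : ℂ)⁻¹ with hc₀
  set qn := qpoly ε n with hqn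
  set qm := qpoly ε m with hqm
  simp only [hcw]
  have hdx : iteratedDeriv 2 (fun x' => c₀ * SI ε x' p qn qm 0) x
      = c₀ * ((SI ε x p (DD ε (DD ε qn)) qm 0 + SI ε x p (DD ε qn) (DD ε qm) 0)
          + (SI ε x p (DD ε qn) (DD ε qm) 0 + SI ε x p qn (DD ε (DD ε qm)) 0)) := by
    rw [show (2:ℕ)=1+1 from rfl, iteratedDeriv_succ, iteratedDeriv_one]
    have e1 : deriv (fun x' => c₀ * SI ε x' p qn qm 0)
        = fun x' => c₀ * (SI ε x' p (DD ε qn) qm 0 + SI ε x' p qn (DD ε qm) 0) :=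
      funext fun x' => ((hasDerivAt_SI_x ε hε p qn qm x').const_mul c₀).deriv
    rw [e1]
    exact (((hasDerivAt_SI_x ε hε p (DD ε qn) qm x).add
      (hasDerivAt_SI_x ε hε p qn (DD ε qm) x)).const_mul c₀).deriv
  have hdp : iteratedDeriv 2 (fun p' => c₀ * SI ε x p' qn qm 0) p
      = c₀ * SI ε x p qn qm 2 := by
    rw [show (2:ℕ)=1+1 from rfl, iteratedDeriv_succ, iteratedDeriv_one]
    have e1 : deriv (fun p' => c₀ * SI ε x p' qn qm 0)
        = fun p' => c₀ * SI ε x p' qn qm 1 :=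
      funext fun p' => ((hasDerivAt_SI_p ε hε x qn qm 0 p').const_mul c₀).deriv
    rw [e1]
    exact ((hasDerivAt_SI_p ε hε x qn qm 1 p).const_mul c₀).deriv
  rw [hdx, hdp]
  have h1 := ibp ε hε x p qn qm
  have h2 := ibp ε hε x p (DD ε qn) qm
  have h3 := ibp ε hε x p qn (DD ε qm)
  have hfin := final_id ε hε n m x p
  rw [← hqn, ← hqm] at hfin
  have hps : (p:ℂ)^2 * SI ε x p qn qm 0
      = -((ε:ℂ)^2/4) * (SI ε x p (DD ε (DD ε qn)) qm 0
          - 2*SI ε x p (DD ε qn) (DD ε qm) 0 + SI ε x p qn (DD ε (DD ε qm)) 0) := by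
    linear_combination (-(Complex.I*(p:ℂ)))*h1 - ((ε:ℂ)/2)*h2 + ((ε:ℂ)/2)*h3
      + ((p:ℂ)^2*SI ε x p qn qm 0)*Complex.I_sq
  push_cast
  linear_combination c₀ * hfin + (c₀/2) * hps
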